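/- Let n, m, p, r be positive integers, let E, A be complex n×n matrices, B a complex n×m matrix, C a complex p×n matrix, and Φ a complex n×r matrix. Fix σ ∈ ℂ and b ∈ ℂ^m. Suppose σE − A is invertible, σ ΦᵀEΦ − ΦᵀAΦ is invertible, and the vector (σE − A)^{-1} B b lies in the column space of Φ, i.e., (σE − A)^{-1} B b = Φ c for some c ∈ ℂ^r. Then the Galerkin-projected reduced transfer function matches the full transfer function tangentially at σ in direction b: (CΦ) (σ ΦᵀEΦ − ΦᵀAΦ)^{-1} (ΦᵀB) b = C (σE − A)^{-1} B b. -/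
import Mathlib


open Matrix

/-- Subspace-containment tangential interpolation lemma for Galerkin-projected
reduced-order models: if `(σE − A)⁻¹ B b` lies in the column space of `Φ` and both the
full and reduced shifted matrices are invertible, then the reduced transfer function
matches the full one tangentially at `σ` in direction `b`. -/
theorem reduced_transfer_function_tangential_interpolation
    (n m p r : ℕ) (hn : 0 < n) (hm : 0 < m) (hp : 0 < p) (hr : 0 < r)
    (E A : Matrix (Fin n) (Fin n) ℂ) (B : Matrix (Fin n) (Fin m) ℂ)
    (C : Matrix (Fin p) (Fin n) ℂ) (Φ : Matrix (Fin n) (Fin r) ℂ)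
    (σ : ℂ) (b : Fin m → ℂ)
    (hfull : IsUnit (σ • E - A))
    (hred : IsUnit (σ • (Φᵀ * E * Φ) - Φᵀ * A * Φ))
    (hsubspace : ∃ c : Fin r → ℂ, (σ • E - A)⁻¹ *ᵥ (B *ᵥ b) = Φ *ᵥ c) :
    (C * Φ) *ᵥ ((σ • (Φᵀ * E * Φ) - Φᵀ * A * Φ)⁻¹ *ᵥ ((Φᵀ * B) *ᵥ b))
      = C *ᵥ ((σ • E - A)⁻¹ *ᵥ (B *ᵥ b)) := by
  obtain ⟨c, hc⟩ := hsubspace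
  set K := σ • E - A with hK
  set Kr := σ • (Φᵀ * E * Φ) - Φᵀ * A * Φ with hKr
  have hKrK : Kr = Φᵀ * K * Φ := by
    rw [hKr, hK]
    rw [Matrix.mul_sub, Matrix.sub_mul]
    congr 1
    rw [Matrix.mul_smul, Matrix.smul_mul]
  have hBb : B *ᵥ b = K *ᵥ (Φ *ᵥ c) := by
    have := congrArg (K *ᵥ ·) hc
    simpa [Matrix.mulVec_mulVec, Matrix.mul_nonsing_inv_cancel_left K B ((Matrix.isUnit_iff_isUnit_det K).mp hfull)] using this
  have hPhiB : (Φᵀ * B) *ᵥ b = Kr *ᵥ c := by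
    rw [hKrK, ← Matrix.mulVec_mulVec, hBb, ← Matrix.mulVec_mulVec,
      ← Matrix.mulVec_mulVec]
  rw [hPhiB, Matrix.mulVec_mulVec, Matrix.mulVec_mulVec,
    Matrix.nonsing_inv_mul_cancel_right Kr _  ((Matrix.isUnit_iff_isUnit_det Kr).mp hred), hc, Matrix.mulVec_mulVec]
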